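/- The unit vector basis (e_i) of (c₀₀, ‖·‖) is 1-subsymmetric: for all finitely supported real scalars (α_i), all signs (θ_i) ∈ {−1, 1}^ℕ, and every strictly increasing sequence (n_i) in ℕ, one has ‖Σ_i θ_i α_i e_{n_i}‖ = ‖Σ_i α_i e_i‖. -/

import Mathlib

abbrev c00 : Type := ℕ →₀ ℝ

noncomputable def flog (x : ℝ) : ℝ := Real.logb 2 (x + 1)

noncomputable def supNorm (x : c00) : ℝ := ⨆ i, |x i|

def proj (E : Finset ℕ) (x : c00) : c00 := x.filter (· ∈ E)

def FLt (A B : Finset ℕ) : Prop := ∀ a ∈ A, ∀ b ∈ B, a < b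

def IsNormC00 (N : c00 → ℝ) : Prop :=
  (∀ x, N x = 0 ↔ x = 0) ∧ (∀ x y, N (x + y) ≤ N x + N y) ∧
    ∀ (a : ℝ) (x : c00), N (a • x) = |a| * N x

def schSet (N : c00 → ℝ) (x : c00) : Set ℝ :=
  {s | ∃ n : ℕ, 2 ≤ n ∧ ∃ E : Fin n → Finset ℕ,
    (∀ i j : Fin n, i < j → FLt (E i) (E j)) ∧
    s = (flog n)⁻¹ * ∑ i, N (proj (E i) x)}

def IsSchlumprechtNorm (N : c00 → ℝ) : Prop :=
  IsNormC00 N ∧ ∀ x : c00, IsLUB (insert (supNorm x) (schSet N x)) (N x)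

def IsBlockSeq (x : ℕ → c00) : Prop :=
  (∀ n, x n ≠ 0) ∧ ∀ n, ∀ i ∈ (x n).support, ∀ j ∈ (x (n+1)).support, i < j

def SeqEquiv (N : c00 → ℝ) (u v : ℕ → c00) : Prop :=
  ∃ c : ℝ, 1 ≤ c ∧ ∀ a : ℕ →₀ ℝ,
    (1 / c) * N (a.sum fun i t => t • u i) ≤ N (a.sum fun i t => t • v i) ∧
    N (a.sum fun i t => t • v i) ≤ c * N (a.sum fun i t => t • u i)

/- ### auxiliary development -/

noncomputable def Tmap (θ : ℕ → ℝ) (n : ℕ ↪ ℕ) (x : c00) : c00 :=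
  Finsupp.embDomain n (Finsupp.onFinset x.support (fun i => θ i * x i)
    (fun i h => Finsupp.mem_support_iff.2 fun h0 => h (by show θ i * x i = 0; rw [h0, mul_zero])))

lemma Tmap_apply (θ : ℕ → ℝ) (n : ℕ ↪ ℕ) (x : c00) (i : ℕ) :
    Tmap θ n x (n i) = θ i * x i := by
  rw [Tmap, Finsupp.embDomain_apply_self, Finsupp.onFinset_apply]

lemma Tmap_apply_not (θ : ℕ → ℝ) (n : ℕ ↪ ℕ) (x : c00) {k : ℕ}
    (hk : k ∉ Set.range n) : Tmap θ n x k = 0 :=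
  Finsupp.embDomain_notin_range _ _ _ hk

lemma Tmap_zero (θ : ℕ → ℝ) (n : ℕ ↪ ℕ) : Tmap θ n 0 = 0 := by
  ext k
  by_cases hk : k ∈ Set.range n
  · obtain ⟨i, rfl⟩ := hk; simp [Tmap_apply]
  · simp [Tmap_apply_not θ n _ hk]

lemma N_nonneg {N : c00 → ℝ} (hN : IsNormC00 N) (x : c00) : 0 ≤ N x := by
  have h0 : N 0 = 0 := (hN.1 0).2 rfl
  have h1 := hN.2.1 x (-x)
  rw [add_neg_cancel, h0] at h1
  have h2 := hN.2.2 (-1) x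
  rw [neg_one_smul] at h2
  simp only [abs_neg, abs_one, one_mul] at h2
  linarith

lemma supNorm_bddAbove (x : c00) : BddAbove (Set.range fun i => |x i|) := by
  refine ⟨∑ j ∈ x.support, |x j|, ?_⟩
  rintro r ⟨i, rfl⟩
  show |x i| ≤ ∑ j ∈ x.support, |x j|
  by_cases hi : i ∈ x.support
  · exact Finset.single_le_sum (f := fun j => |x j|) (fun j _ => abs_nonneg _) hi
  · rw [Finsupp.notMem_support_iff.1 hi, abs_zero]
    exact Finset.sum_nonneg fun j _ => abs_nonneg _

lemma supNorm_Tmap (θ : ℕ → ℝ) (hθ : ∀ i, θ i = 1 ∨ θ i = -1) (n : ℕ ↪ ℕ) (x : c00) :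
    supNorm (Tmap θ n x) = supNorm x := by
  have habs : ∀ i, |θ i| = 1 := fun i => by rcases hθ i with h | h <;> simp [h]
  have hb := supNorm_bddAbove x
  have hbT := supNorm_bddAbove (Tmap θ n x)
  apply le_antisymm
  · apply ciSup_le
    intro k
    by_cases hk : k ∈ Set.range n
    · obtain ⟨i, rfl⟩ := hk
      rw [Tmap_apply, abs_mul, habs, one_mul]
      exact le_ciSup hb i
    · rw [Tmap_apply_not θ n x hk, abs_zero]
      exact le_trans (abs_nonneg (x 0)) (le_ciSup hb 0)
  · apply ciSup_le
    intro i
    have h : |x i| = |Tmap θ n x (n i)| := by rw [Tmap_apply, abs_mul, habs, one_mul]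
    rw [h]
    exact le_ciSup hbT (n i)

lemma proj_apply (E : Finset ℕ) (x : c00) (k : ℕ) :
    proj E x k = if k ∈ E then x k else 0 := rfl

lemma support_proj (E : Finset ℕ) (x : c00) :
    (proj E x).support = x.support.filter (fun k => k ∈ E) := rfl

lemma support_proj_subset (E : Finset ℕ) (x : c00) :
    (proj E x).support ⊆ x.support := by
  rw [support_proj]; exact Finset.filter_subset _ _

lemma proj_eq_self {E : Finset ℕ} {x : c00} (h : x.support ⊆ E) : proj E x = x := by
  ext k
  rw [proj_apply]
  split_ifs with hk
  · rfl
  · symm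
    rw [← Finsupp.notMem_support_iff]
    exact fun hs => hk (h hs)

lemma proj_Tmap (θ : ℕ → ℝ) (n : ℕ ↪ ℕ) (E : Finset ℕ) (x : c00) :
    proj E (Tmap θ n x) = Tmap θ n (proj (E.preimage n n.injective.injOn) x) := by
  ext k
  by_cases hk : k ∈ Set.range n
  · obtain ⟨i, rfl⟩ := hk
    simp only [proj_apply, Tmap_apply, Finset.mem_preimage, mul_ite, mul_zero]
  · rw [proj_apply, Tmap_apply_not θ n x hk, ite_self, Tmap_apply_not θ n _ hk]

lemma proj_map_Tmap (θ : ℕ → ℝ) (n : ℕ ↪ ℕ) (E : Finset ℕ) (x : c00) :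
    proj (E.map n) (Tmap θ n x) = Tmap θ n (proj E x) := by
  rw [proj_Tmap, Finset.preimage_map]

lemma FLt_preimage {n : ℕ ↪ ℕ} (hn : StrictMono n) {A B : Finset ℕ} (h : FLt A B) :
    FLt (A.preimage n n.injective.injOn) (B.preimage n n.injective.injOn) := by
  intro a ha b hb
  rw [Finset.mem_preimage] at ha hb
  exact hn.lt_iff_lt.mp (h _ ha _ hb)

lemma FLt_map {n : ℕ ↪ ℕ} (hn : StrictMono n) {A B : Finset ℕ} (h : FLt A B) :
    FLt (A.map n) (B.map n) := by
  intro a ha b hb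
  rw [Finset.mem_map] at ha hb
  obtain ⟨a', ha', rfl⟩ := ha
  obtain ⟨b', hb', rfl⟩ := hb
  exact hn (h _ ha' _ hb')

lemma one_lt_flog {m : ℕ} (hm : 2 ≤ m) : 1 < flog m := by
  have h2 : (2 : ℝ) < (m : ℝ) + 1 := by
    have : (2 : ℝ) ≤ (m : ℝ) := by exact_mod_cast hm
    linarith
  calc (1 : ℝ) = Real.logb 2 2 := (Real.logb_self_eq_one (b := 2) (by norm_num)).symm
    _ < Real.logb 2 ((m : ℝ) + 1) := Real.logb_lt_logb (by norm_num) (by norm_num) h2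

lemma flog_two_le {m : ℕ} (hm : 2 ≤ m) : flog 2 ≤ flog m := by
  have h2 : (2 : ℝ) + 1 ≤ (m : ℝ) + 1 := by
    have : (2 : ℝ) ≤ (m : ℝ) := by exact_mod_cast hm
    linarith
  exact Real.logb_le_logb_of_le (by norm_num) (by norm_num) h2

lemma sum_single_eq (a : ℕ →₀ ℝ) :
    (a.sum fun i t => t • Finsupp.single i (1 : ℝ)) = a := by
  have : (fun (i : ℕ) (t : ℝ) => t • Finsupp.single i (1 : ℝ)) =
      fun i t => Finsupp.single i t := by
    funext i t
    rw [Finsupp.smul_single, smul_eq_mul, mul_one]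
  rw [this, Finsupp.sum_single]

lemma sum_Tmap (θ : ℕ → ℝ) (n : ℕ ↪ ℕ) (a : c00) :
    (a.sum fun i t => (θ i * t) • Finsupp.single (n i) (1 : ℝ)) = Tmap θ n a := by
  ext k
  rw [Finsupp.sum_apply]
  by_cases hk : k ∈ Set.range n
  · obtain ⟨j, rfl⟩ := hk
    rw [Tmap_apply]
    by_cases hj : j ∈ a.support
    · rw [Finsupp.sum, Finset.sum_eq_single_of_mem j hj]
      · rw [Finsupp.smul_single, smul_eq_mul, mul_one, Finsupp.single_eq_same]
      · intro b _ hbj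
        rw [Finsupp.smul_single, smul_eq_mul, mul_one, Finsupp.single_apply,
          if_neg (fun h => hbj (n.injective h))]
    · rw [Finsupp.notMem_support_iff.1 hj, mul_zero, Finsupp.sum,
        Finset.sum_eq_zero]
      intro b hb
      rw [Finsupp.smul_single, smul_eq_mul, mul_one, Finsupp.single_apply,
        if_neg (fun h => hj (by rwa [← n.injective h]))]
  · rw [Tmap_apply_not θ n a hk, Finsupp.sum, Finset.sum_eq_zero]
    intro b _
    rw [Finsupp.smul_single, smul_eq_mul, mul_one, Finsupp.single_apply,
      if_neg (fun h => hk ⟨b, h⟩)]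

lemma Tmap_norm (N : c00 → ℝ) (hN : IsSchlumprechtNorm N)
    (θ : ℕ → ℝ) (hθ : ∀ i, θ i = 1 ∨ θ i = -1)
    (n : ℕ ↪ ℕ) (hmono : StrictMono n) (x : c00) :
    N (Tmap θ n x) = N x := by
  have hnn : ∀ y : c00, 0 ≤ N y := N_nonneg hN.1
  have hzero : N (0 : c00) = 0 := (hN.1.1 0).2 rfl
  have hf2 : 1 < flog 2 := one_lt_flog le_rfl
  set c : ℝ := (flog 2)⁻¹ with hc
  have hc0 : 0 < c := inv_pos.2 (lt_trans one_pos hf2)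
  have hc1 : c < 1 := by
    rw [hc]
    exact inv_lt_one_of_one_lt₀ hf2
  suffices key : ∀ k : ℕ, ∀ y : c00, y.support.card = k → N (Tmap θ n y) = N y from key _ x rfl
  intro k
  induction k using Nat.strong_induction_on with
  | _ k IH =>
  intro x hxk
  have lubx := hN.2 x
  have lubT := hN.2 (Tmap θ n x)
  have hsupT : supNorm (Tmap θ n x) = supNorm x := supNorm_Tmap θ hθ n x
  have hcm : ∀ m : ℕ, 2 ≤ m → (flog m)⁻¹ ≤ c := by
    intro m hm
    exact inv_anti₀ (lt_trans one_pos hf2) (flog_two_le hm)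
  -- Step A
  have hA : N (Tmap θ n x) ≤ max (N x) (c * N (Tmap θ n x)) := by
    apply lubT.2
    intro s hs
    rcases Set.mem_insert_iff.1 hs with rfl | hs
    · rw [hsupT]
      exact le_max_of_le_left (lubx.1 (Set.mem_insert _ _))
    · obtain ⟨m, hm2, E, hElt, rfl⟩ := hs
      have hproj : ∀ i : Fin m, proj (E i) (Tmap θ n x)
          = Tmap θ n (proj ((E i).preimage n n.injective.injOn) x) :=
        fun i => proj_Tmap θ n (E i) x
      set F : Fin m → Finset ℕ := fun i => (E i).preimage n n.injective.injOn with hF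
      by_cases hdeg : ∃ i0 : Fin m, (proj (F i0) x).support = x.support
      · obtain ⟨i0, hi0⟩ := hdeg
        have hsub : x.support ⊆ F i0 := by
          intro t ht
          rw [support_proj] at hi0
          have ht' : t ∈ x.support.filter (fun k => k ∈ F i0) := hi0.symm ▸ ht
          exact (Finset.mem_filter.1 ht').2
        have hx0 : proj (F i0) x = x := proj_eq_self hsub
        have hzero' : ∀ j : Fin m, j ≠ i0 → proj (F j) x = 0 := by
          intro j hj
          rw [← Finsupp.support_eq_empty, support_proj, Finset.eq_empty_iff_forall_notMem]
          intro t ht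
          rw [Finset.mem_filter] at ht
          have h1 : t ∈ F i0 := hsub ht.1
          have h2 : t ∈ F j := ht.2
          simp only [hF, Finset.mem_preimage] at h1 h2
          rcases lt_or_gt_of_ne hj with h | h
          · exact lt_irrefl (n t) (hElt j i0 h _ h2 _ h1)
          · exact lt_irrefl (n t) (hElt i0 j h _ h1 _ h2)
        have hsum : ∑ i, N (proj (E i) (Tmap θ n x)) = N (Tmap θ n x) := by
          rw [Fintype.sum_eq_single i0]
          · rw [hproj i0, hx0]
          · intro j hj
            rw [hproj j]
            show N (Tmap θ n (proj (F j) x)) = 0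
            rw [hzero' j hj, Tmap_zero, hzero]
        rw [hsum]
        exact le_max_of_le_right (mul_le_mul_of_nonneg_right (hcm m hm2) (hnn _))
      · push_neg at hdeg
        refine le_max_of_le_left (lubx.1 (Set.mem_insert_of_mem _ ?_))
        refine ⟨m, hm2, F, fun i j hij => FLt_preimage hmono (hElt i j hij), ?_⟩
        congr 1
        apply Finset.sum_congr rfl
        intro i _
        rw [hproj i]
        have hss : (proj (F i) x).support ⊂ x.support :=
          Finset.ssubset_iff_subset_ne.2 ⟨support_proj_subset _ _, hdeg i⟩
        exact IH _ (hxk ▸ Finset.card_lt_card hss) _ rfl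
  -- Step B
  have hB : N x ≤ max (N (Tmap θ n x)) (c * N x) := by
    apply lubx.2
    intro s hs
    rcases Set.mem_insert_iff.1 hs with rfl | hs
    · rw [← hsupT]
      exact le_max_of_le_left (lubT.1 (Set.mem_insert _ _))
    · obtain ⟨m, hm2, E, hElt, rfl⟩ := hs
      by_cases hdeg : ∃ i0 : Fin m, (proj (E i0) x).support = x.support
      · obtain ⟨i0, hi0⟩ := hdeg
        have hsub : x.support ⊆ E i0 := by
          intro t ht
          rw [support_proj] at hi0
          have ht' : t ∈ x.support.filter (fun k => k ∈ E i0) := hi0.symm ▸ ht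
          exact (Finset.mem_filter.1 ht').2
        have hx0 : proj (E i0) x = x := proj_eq_self hsub
        have hzero' : ∀ j : Fin m, j ≠ i0 → proj (E j) x = 0 := by
          intro j hj
          rw [← Finsupp.support_eq_empty, support_proj, Finset.eq_empty_iff_forall_notMem]
          intro t ht
          rw [Finset.mem_filter] at ht
          have h1 : t ∈ E i0 := hsub ht.1
          rcases lt_or_gt_of_ne hj with h | h
          · exact lt_irrefl t (hElt j i0 h _ ht.2 _ h1)
          · exact lt_irrefl t (hElt i0 j h _ h1 _ ht.2)
        have hsum : ∑ i, N (proj (E i) x) = N x := by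
          rw [Fintype.sum_eq_single i0]
          · rw [hx0]
          · intro j hj
            rw [hzero' j hj, hzero]
        rw [hsum]
        exact le_max_of_le_right (mul_le_mul_of_nonneg_right (hcm m hm2) (hnn _))
      · push_neg at hdeg
        refine le_max_of_le_left (lubT.1 (Set.mem_insert_of_mem _ ?_))
        refine ⟨m, hm2, fun i => (E i).map n, fun i j hij => FLt_map hmono (hElt i j hij), ?_⟩
        congr 1
        apply Finset.sum_congr rfl
        intro i _
        show N (proj (E i) x) = N (proj ((E i).map n) (Tmap θ n x))
        rw [proj_map_Tmap]
        have hss : (proj (E i) x).support ⊂ x.support :=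
          Finset.ssubset_iff_subset_ne.2 ⟨support_proj_subset _ _, hdeg i⟩
        exact (IH _ (hxk ▸ Finset.card_lt_card hss) _ rfl).symm
  -- combine
  have hAle : N (Tmap θ n x) ≤ N x := by
    rcases le_total (c * N (Tmap θ n x)) (N x) with h | h
    · rwa [max_eq_left h] at hA
    · rw [max_eq_right h] at hA
      nlinarith [hnn (Tmap θ n x), hnn x]
  have hBle : N x ≤ N (Tmap θ n x) := by
    rcases le_total (c * N x) (N (Tmap θ n x)) with h | h
    · rwa [max_eq_left h] at hB
    · rw [max_eq_right h] at hB
      nlinarith [hnn (Tmap θ n x), hnn x]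
  exact le_antisymm hAle hBle

/-- the unit vector basis of `(c₀₀, ‖·‖)` is 1-subsymmetric. -/
theorem basis_one_subsymmetric
    (N : c00 → ℝ) (hN : IsSchlumprechtNorm N)
    (a : ℕ →₀ ℝ) (θ : ℕ → ℝ) (hθ : ∀ i, θ i = 1 ∨ θ i = -1)
    (n : ℕ → ℕ) (hn : StrictMono n) :
    N (a.sum fun i t => (θ i * t) • Finsupp.single (n i) (1 : ℝ)) =
      N (a.sum fun i t => t • Finsupp.single i (1 : ℝ)) := by
  have h1 : (a.sum fun i t => (θ i * t) • Finsupp.single (n i) (1 : ℝ))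
      = Tmap θ ⟨n, hn.injective⟩ a := sum_Tmap θ ⟨n, hn.injective⟩ a
  rw [h1, sum_single_eq]
  exact Tmap_norm N hN θ hθ ⟨n, hn.injective⟩ hn a
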